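/- Let k be a field and d ∈ k. If x, y ∈ k satisfy y² = x³ + d and x ≠ 0, then the elements x₂ = (x³ + 4d)/x² and y₂ = (x³ − 8d)·y/x³ satisfy y₂² = x₂³ − 27d. In other words, the map (x, y) ↦ ((x³+4d)/x², (x³−8d)y/x³) sends affine points of the curve y² = x³ + d with x ≠ 0 to affine points of the curve y² = x³ − 27d. -/

import Mathlib

/-- The explicit 3-isogeny formula: if `y² = x³ + d` and `x ≠ 0`, then
`x₂ = (x³ + 4d)/x²` and `y₂ = (x³ - 8d) y / x³` satisfy `y₂² = x₂³ - 27 d`. -/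
theorem three_isogeny_formula_j_zero {k : Type*} [Field k] (d x y : k)
    (hx : x ≠ 0) (h : y ^ 2 = x ^ 3 + d) :
    ((x ^ 3 - 8 * d) * y / x ^ 3) ^ 2 = ((x ^ 3 + 4 * d) / x ^ 2) ^ 3 - 27 * d := by
  have h6 : x ^ 6 ≠ 0 := pow_ne_zero _ hx
  field_simp
  linear_combination ((x ^ 3 - 8 * d) ^ 2) * h
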